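/- Let α ≥ 0 be fixed and let f : (0,∞) → ℂ be measurable with f(t) t^{-α} bounded on (0,∞). Then for any fixed β > 0 there is a constant C such that for all m, y > 0: |∫₀^{m/2} e^{-t} t^{m-1} f(yt) dt| + |∫_{2m}^∞ e^{-t} t^{m-1} f(yt) dt| ≤ C · y^α (m+1)^{-β} Γ(m+α). -/

import Mathlib

open MeasureTheory Set

private lemma tilt_integrable {s b : ℝ} (hs : 0 < s) (hb : 0 < b) :
    IntegrableOn (fun t : ℝ => t ^ (s - 1) * Real.exp (-(b * t))) (Ioi 0) := by
  have h := integrableOn_rpow_mul_exp_neg_mul_rpow (p := 1) (s := s - 1) (b := b)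
    (by linarith) one_pos hb
  simpa [Real.rpow_one, neg_mul] using h

private lemma decay_bound {β : ℝ} (hβ : 0 < β) {r : ℝ} (hr0 : 0 < r) (hr1 : r < 1) :
    ∃ K : ℝ, 0 ≤ K ∧ ∀ m : ℝ, 0 < m → r ^ m ≤ K * (m + 1) ^ (-β) := by
  have ha : 0 < -Real.log r := by have := Real.log_neg hr0 hr1; linarith
  set a := -Real.log r with ha_def
  refine ⟨Real.exp a * (2 * β / a) ^ β, by positivity, fun m hm => ?_⟩
  have hx : (0:ℝ) < m + 1 := by linarith
  rw [Real.rpow_neg hx.le, ← div_eq_mul_inv, le_div_iff₀ (Real.rpow_pos_of_pos hx β)]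
  have hrm : r ^ m = Real.exp a * Real.exp (-(a * (m + 1))) := by
    rw [Real.rpow_def_of_pos hr0, ← Real.exp_add]
    congr 1
    rw [ha_def]; ring
  have hu : m + 1 ≤ 2 * β / a * Real.exp (a * (m + 1) / (2 * β)) := by
    have h1 := Real.add_one_le_exp (a * (m + 1) / (2 * β))
    have h2 : a * (m + 1) / (2 * β) ≤ Real.exp (a * (m + 1) / (2 * β)) := by linarith
    have h3 := mul_le_mul_of_nonneg_left h2 (le_of_lt (by positivity : (0:ℝ) < 2 * β / a))
    calc m + 1 = 2 * β / a * (a * (m + 1) / (2 * β)) := by field_simp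
      _ ≤ _ := h3
  have hpow : (m + 1) ^ β ≤ (2 * β / a) ^ β * Real.exp (a * (m + 1) / 2) := by
    calc (m + 1) ^ β ≤ (2 * β / a * Real.exp (a * (m + 1) / (2 * β))) ^ β :=
          Real.rpow_le_rpow hx.le hu hβ.le
      _ = (2 * β / a) ^ β * (Real.exp (a * (m + 1) / (2 * β))) ^ β :=
          Real.mul_rpow (by positivity) (Real.exp_pos _).le
      _ = (2 * β / a) ^ β * Real.exp (a * (m + 1) / (2 * β) * β) := by
          rw [← Real.exp_mul]
      _ = (2 * β / a) ^ β * Real.exp (a * (m + 1) / 2) := by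
          congr 2; field_simp
  calc r ^ m * (m + 1) ^ β
      ≤ (Real.exp a * Real.exp (-(a * (m + 1)))) *
        ((2 * β / a) ^ β * Real.exp (a * (m + 1) / 2)) := by
        rw [hrm]
        exact mul_le_mul_of_nonneg_left hpow (by positivity)
    _ = Real.exp a * (2 * β / a) ^ β * Real.exp (-(a * (m + 1)) + a * (m + 1) / 2) := by
        rw [Real.exp_add]; ring
    _ ≤ Real.exp a * (2 * β / a) ^ β * 1 := by
        refine mul_le_mul_of_nonneg_left ?_ (by positivity)
        rw [Real.exp_le_one_iff]
        nlinarith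
    _ = Real.exp a * (2 * β / a) ^ β := mul_one _

/-- Tail estimate for Gamma-weighted integrals: if `f(t) t^{-α}` is bounded on `(0,∞)`,
then for any `β > 0` the parts of `∫₀^∞ e^{-t} t^{m-1} f(yt) dt` over `(0, m/2]` and
`[2m, ∞)` are `O(y^α (m+1)^{-β} Γ(m+α))`, uniformly for `m, y > 0`. -/
theorem gamma_integral_tails (α : ℝ) (hα : 0 ≤ α) (f : ℝ → ℂ)
    (hmeas : Measurable f) (hbound : ∃ c : ℝ, ∀ t : ℝ, 0 < t → ‖f t‖ ≤ c * t ^ α)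
    (β : ℝ) (hβ : 0 < β) :
    ∃ C : ℝ, ∀ m y : ℝ, 0 < m → 0 < y →
      ‖∫ t in Ioc (0:ℝ) (m / 2), ((Real.exp (-t) * t ^ (m - 1) : ℝ) : ℂ) * f (y * t)‖ +
        ‖∫ t in Ioi (2 * m), ((Real.exp (-t) * t ^ (m - 1) : ℝ) : ℂ) * f (y * t)‖ ≤
      C * y ^ α * (m + 1) ^ (-β) * Real.Gamma (m + α) := by
  obtain ⟨c, hc⟩ := hbound
  set c' : ℝ := max c 0 with hc'_def
  have hc'0 : 0 ≤ c' := le_max_right _ _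
  have hcf : ∀ t : ℝ, 0 < t → ‖f t‖ ≤ c' * t ^ α := fun t ht =>
    (hc t ht).trans (mul_le_mul_of_nonneg_right (le_max_left _ _) (Real.rpow_nonneg ht.le α))
  obtain ⟨K, hK0, hK⟩ := decay_bound hβ (r := 0.9) (by norm_num) (by norm_num)
  refine ⟨c' * (1 + 2 ^ α) * K, fun m y hm hy => ?_⟩
  set s := m + α with hs_def
  have hs : 0 < s := by rw [hs_def]; linarith
  have hΓ : 0 < Real.Gamma s := Real.Gamma_pos_of_pos hs
  -- first tail
  have hb1 : ‖∫ t in Ioc (0:ℝ) (m / 2), ((Real.exp (-t) * t ^ (m - 1) : ℝ) : ℂ) * f (y * t)‖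
      ≤ c' * y ^ α * Real.exp (m / 2) * ((1/2) ^ s * Real.Gamma s) := by
    set g : ℝ → ℝ := fun t => c' * y ^ α * Real.exp (m/2) * (t ^ (s-1) * Real.exp (-(2*t)))
      with hg_def
    have hgint : IntegrableOn g (Ioi 0) := ((tilt_integrable hs two_pos).const_mul _)
    have h1 : ‖∫ t in Ioc (0:ℝ) (m / 2), ((Real.exp (-t) * t ^ (m - 1) : ℝ) : ℂ) * f (y * t)‖
        ≤ ∫ t in Ioc (0:ℝ) (m/2), g t := by
      refine norm_integral_le_of_norm_le (hgint.mono_set Ioc_subset_Ioi_self) ?_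
      filter_upwards [ae_restrict_mem measurableSet_Ioc] with t ht
      obtain ⟨ht0, htm⟩ := ht
      rw [norm_mul, Complex.norm_real, Real.norm_of_nonneg (by positivity)]
      have hfyt : ‖f (y*t)‖ ≤ c' * (y^α * t^α) := by
        have h := hcf (y*t) (by positivity)
        rwa [Real.mul_rpow hy.le ht0.le] at h
      have hexp : Real.exp (-t) ≤ Real.exp (m/2) * Real.exp (-(2*t)) := by
        rw [← Real.exp_add]; exact Real.exp_le_exp.mpr (by linarith)
      have htpow : t ^ (s-1) = t ^ (m-1) * t ^ α := by
        rw [← Real.rpow_add ht0]; congr 1; rw [hs_def]; ring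
      calc Real.exp (-t) * t ^ (m-1) * ‖f (y*t)‖
          ≤ Real.exp (-t) * t ^ (m-1) * (c' * (y^α * t^α)) :=
            mul_le_mul_of_nonneg_left hfyt (by positivity)
        _ = c' * y^α * (t ^ (s-1) * Real.exp (-t)) := by rw [htpow]; ring
        _ ≤ g t := by
            have h3 : t ^ (s-1) * Real.exp (-t)
                ≤ t ^ (s-1) * (Real.exp (m/2) * Real.exp (-(2*t))) :=
              mul_le_mul_of_nonneg_left hexp (Real.rpow_nonneg ht0.le _)
            refine le_of_le_of_eq (mul_le_mul_of_nonneg_left h3 (by positivity)) ?_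
            rw [hg_def]; ring
    have h2 : ∫ t in Ioc (0:ℝ) (m/2), g t ≤ ∫ t in Ioi (0:ℝ), g t := by
      refine setIntegral_mono_set hgint ?_ (HasSubset.Subset.eventuallyLE Ioc_subset_Ioi_self)
      filter_upwards [ae_restrict_mem measurableSet_Ioi] with t ht
      have : (0:ℝ) < t := ht
      positivity
    have h3 : ∫ t in Ioi (0:ℝ), g t
        = c' * y^α * Real.exp (m/2) * ((1/2) ^ s * Real.Gamma s) := by
      rw [hg_def, integral_const_mul, Real.integral_rpow_mul_exp_neg_mul_Ioi hs two_pos]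
    linarith
  -- second tail
  have hb2 : ‖∫ t in Ioi (2 * m), ((Real.exp (-t) * t ^ (m - 1) : ℝ) : ℂ) * f (y * t)‖
      ≤ c' * y ^ α * Real.exp (-m) * ((2:ℝ) ^ s * Real.Gamma s) := by
    have hhalf : (0:ℝ) < 2⁻¹ := by norm_num
    set g : ℝ → ℝ := fun t => c' * y ^ α * Real.exp (-m) * (t ^ (s-1) * Real.exp (-(2⁻¹*t)))
      with hg_def
    have hgint : IntegrableOn g (Ioi 0) := ((tilt_integrable hs hhalf).const_mul _)
    have hsub : Ioi (2*m) ⊆ Ioi (0:ℝ) := fun t ht => lt_trans (by linarith : (0:ℝ) < 2*m) ht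
    have h1 : ‖∫ t in Ioi (2 * m), ((Real.exp (-t) * t ^ (m - 1) : ℝ) : ℂ) * f (y * t)‖
        ≤ ∫ t in Ioi (2*m), g t := by
      refine norm_integral_le_of_norm_le (hgint.mono_set hsub) ?_
      filter_upwards [ae_restrict_mem measurableSet_Ioi] with t ht
      have ht0 : (0:ℝ) < t := lt_trans (by linarith) ht
      rw [norm_mul, Complex.norm_real, Real.norm_of_nonneg (by positivity)]
      have hfyt : ‖f (y*t)‖ ≤ c' * (y^α * t^α) := by
        have h := hcf (y*t) (by positivity)
        rwa [Real.mul_rpow hy.le ht0.le] at h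
      have hexp : Real.exp (-t) ≤ Real.exp (-m) * Real.exp (-(2⁻¹*t)) := by
        rw [← Real.exp_add]
        refine Real.exp_le_exp.mpr ?_
        have : 2 * m < t := ht
        linarith
      have htpow : t ^ (s-1) = t ^ (m-1) * t ^ α := by
        rw [← Real.rpow_add ht0]; congr 1; rw [hs_def]; ring
      calc Real.exp (-t) * t ^ (m-1) * ‖f (y*t)‖
          ≤ Real.exp (-t) * t ^ (m-1) * (c' * (y^α * t^α)) :=
            mul_le_mul_of_nonneg_left hfyt (by positivity)
        _ = c' * y^α * (t ^ (s-1) * Real.exp (-t)) := by rw [htpow]; ring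
        _ ≤ g t := by
            have h3 : t ^ (s-1) * Real.exp (-t)
                ≤ t ^ (s-1) * (Real.exp (-m) * Real.exp (-(2⁻¹*t))) :=
              mul_le_mul_of_nonneg_left hexp (Real.rpow_nonneg ht0.le _)
            refine le_of_le_of_eq (mul_le_mul_of_nonneg_left h3 (by positivity)) ?_
            rw [hg_def]; ring
    have h2 : ∫ t in Ioi (2*m), g t ≤ ∫ t in Ioi (0:ℝ), g t := by
      refine setIntegral_mono_set hgint ?_ (HasSubset.Subset.eventuallyLE hsub)
      filter_upwards [ae_restrict_mem measurableSet_Ioi] with t ht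
      have : (0:ℝ) < t := ht
      positivity
    have h3 : ∫ t in Ioi (0:ℝ), g t
        = c' * y^α * Real.exp (-m) * ((2:ℝ) ^ s * Real.Gamma s) := by
      rw [hg_def, integral_const_mul, Real.integral_rpow_mul_exp_neg_mul_Ioi hs hhalf]
      norm_num
    linarith
  -- numeric geometric bounds
  have hA : Real.exp (m/2) * (1/2:ℝ) ^ s ≤ (0.9:ℝ) ^ m := by
    have h12 : (1/2:ℝ) ^ s = (1/2:ℝ) ^ m * (1/2:ℝ) ^ α := by
      rw [hs_def, Real.rpow_add (by norm_num)]
    have hle1 : (1/2:ℝ) ^ α ≤ 1 :=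
      Real.rpow_le_one (by norm_num) (by norm_num) hα
    have hem : Real.exp (m/2) = (Real.exp (1/2)) ^ m := by
      rw [← Real.exp_mul]; congr 1; ring
    have hbase : Real.exp (1/2) * (1/2:ℝ) ≤ 0.9 := by
      have hsq : Real.exp (1/2) * Real.exp (1/2) = Real.exp 1 := by
        rw [← Real.exp_add]; norm_num
      nlinarith [Real.exp_one_lt_d9, Real.exp_pos (1/2:ℝ)]
    calc Real.exp (m/2) * (1/2:ℝ) ^ s
        = (Real.exp (1/2)) ^ m * (1/2:ℝ) ^ m * (1/2:ℝ) ^ α := by rw [h12, hem]; ring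
      _ ≤ (Real.exp (1/2)) ^ m * (1/2:ℝ) ^ m * 1 := by
          refine mul_le_mul_of_nonneg_left hle1 ?_
          positivity
      _ = (Real.exp (1/2) * (1/2:ℝ)) ^ m := by
          rw [mul_one, ← Real.mul_rpow (Real.exp_pos _).le (by norm_num)]
      _ ≤ (0.9:ℝ) ^ m := Real.rpow_le_rpow (by positivity) hbase hm.le
  have hB : Real.exp (-m) * (2:ℝ) ^ s ≤ (2:ℝ) ^ α * (0.9:ℝ) ^ m := by
    have h2s : (2:ℝ) ^ s = (2:ℝ) ^ m * (2:ℝ) ^ α := by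
      rw [hs_def, Real.rpow_add (by norm_num)]
    have hem : Real.exp (-m) = (Real.exp (-1)) ^ m := by
      rw [← Real.exp_mul]; congr 1; ring
    have hbase : Real.exp (-1) * (2:ℝ) ≤ 0.9 := by
      have hinv : Real.exp (-1) = (Real.exp 1)⁻¹ := by
        rw [Real.exp_neg]
      rw [hinv]
      rw [inv_mul_le_iff₀ (Real.exp_pos 1)]
      nlinarith [Real.exp_one_gt_d9]
    calc Real.exp (-m) * (2:ℝ) ^ s
        = (2:ℝ) ^ α * ((Real.exp (-1)) ^ m * (2:ℝ) ^ m) := by rw [h2s, hem]; ring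
      _ = (2:ℝ) ^ α * (Real.exp (-1) * 2) ^ m := by
          rw [← Real.mul_rpow (Real.exp_pos _).le (by norm_num)]
      _ ≤ (2:ℝ) ^ α * (0.9:ℝ) ^ m := by
          refine mul_le_mul_of_nonneg_left
            (Real.rpow_le_rpow (by positivity) hbase hm.le) ?_
          positivity
  -- assemble
  have h09 : (0.9:ℝ) ^ m ≤ K * (m+1) ^ (-β) := hK m hm
  have hy' : (0:ℝ) ≤ y ^ α := Real.rpow_nonneg hy.le α
  calc ‖∫ t in Ioc (0:ℝ) (m / 2), ((Real.exp (-t) * t ^ (m - 1) : ℝ) : ℂ) * f (y * t)‖ +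
        ‖∫ t in Ioi (2 * m), ((Real.exp (-t) * t ^ (m - 1) : ℝ) : ℂ) * f (y * t)‖
      ≤ c' * y ^ α * Real.exp (m / 2) * ((1/2) ^ s * Real.Gamma s) +
        c' * y ^ α * Real.exp (-m) * ((2:ℝ) ^ s * Real.Gamma s) := add_le_add hb1 hb2
    _ = (c' * y ^ α * Real.Gamma s) *
        (Real.exp (m/2) * (1/2:ℝ) ^ s + Real.exp (-m) * (2:ℝ) ^ s) := by ring
    _ ≤ (c' * y ^ α * Real.Gamma s) * ((1 + 2 ^ α) * (0.9:ℝ) ^ m) := by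
        refine mul_le_mul_of_nonneg_left ?_ (by positivity)
        have := add_le_add hA hB
        nlinarith
    _ ≤ (c' * y ^ α * Real.Gamma s) * ((1 + 2 ^ α) * (K * (m+1) ^ (-β))) := by
        refine mul_le_mul_of_nonneg_left (mul_le_mul_of_nonneg_left h09 ?_) (by positivity)
        positivity
    _ = c' * (1 + 2 ^ α) * K * y ^ α * (m + 1) ^ (-β) * Real.Gamma s := by ring
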